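/- Let g : [0,∞) → (−1,1) be continuous, and for z ∈ ℝ² ∖ {0}, u ∈ ℝ², define F_z(u) := ‖u‖ − (g(‖z‖)/‖z‖)·⟨z^⊥, u⟩, where z^⊥ denotes the rotation of z by π/2. Then for every z ∈ ℝ² ∖ {0}, the infimum of ∫ from 0 to 1 of F_{γ(t)}(γ'(t)) dt, taken over all C¹ paths γ : [0,1] → ℝ² with γ(0) = z, γ(1) = 0 and γ(t) ≠ 0 for all t ∈ [0,1), equals ∫ from 0 to ‖z‖ of √(1 − g(r)²) dr. -/

import Mathlib

open scoped RealInnerProductSpace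
open MeasureTheory Real

noncomputable section

abbrev E2 : Type := EuclideanSpace ℝ (Fin 2)

def mk2 (a b : ℝ) : E2 := WithLp.toLp 2 ![a, b]

def IsAsymNorm (F : E2 → ℝ) : Prop :=
  ConvexOn ℝ Set.univ F ∧
  (∀ (c : ℝ), 0 ≤ c → ∀ u : E2, F (c • u) = c * F u) ∧
  (∀ u : E2, 0 ≤ F u) ∧
  (∀ u : E2, u ≠ 0 → 0 < F u)

def IsAcute (F : E2 → ℝ) (u v : E2) : Prop :=
  ∀ δ : ℝ, 0 ≤ δ → F u ≤ F (u + δ • v) ∧ F v ≤ F (v + δ • u)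

noncomputable def kappa (F : E2 → ℝ) : ℝ :=
  sSup {r : ℝ | ∃ u v : E2, ‖u‖ = 1 ∧ ‖v‖ = 1 ∧ r = F u / F v}

def det2 (u v : E2) : ℝ := u 0 * v 1 - u 1 * v 0

def IsIntVec (u : E2) : Prop := (∃ n : ℤ, u 0 = (n : ℝ)) ∧ (∃ n : ℤ, u 1 = (n : ℝ))

def eTheta (θ : ℝ) : E2 := mk2 (Real.cos θ) (Real.sin θ)

noncomputable def phiF (F : E2 → ℝ) (θ : ℝ) : ℝ :=
  Real.arctan (det2 (eTheta θ) (gradient F (eTheta θ)) / F (eTheta θ))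

def rot2 (θ : ℝ) (w : E2) : E2 :=
  mk2 (Real.cos θ * w 0 - Real.sin θ * w 1) (Real.sin θ * w 0 + Real.cos θ * w 1)

def perp (z : E2) : E2 := mk2 (-(z 1)) (z 0)

lemma hasDerivAt_mk2 {f g : ℝ → ℝ} {f' g' : ℝ} {t : ℝ}
    (hf : HasDerivAt f f' t) (hg : HasDerivAt g g' t) :
    HasDerivAt (fun t => mk2 (f t) (g t)) (mk2 f' g') t := by
  have h1 : HasDerivAt (fun t => (![f t, g t] : Fin 2 → ℝ)) ![f', g'] t := by
    rw [hasDerivAt_pi]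
    intro i
    fin_cases i <;> simpa
  set L := (PiLp.continuousLinearEquiv 2 ℝ (fun _ : Fin 2 => ℝ)).symm.toContinuousLinearMap with hL
  have h2 := L.hasFDerivAt.comp t h1.hasFDerivAt
  have h3 : HasDerivAt (⇑L ∘ fun t => ![f t, g t]) (L ![f', g']) t := by
    have := h2.hasDerivAt
    simpa using this
  have h4 : (⇑L ∘ fun t => ![f t, g t]) = fun t => mk2 (f t) (g t) := rfl
  have h5 : L ![f', g'] = mk2 f' g' := rfl
  rw [h4, h5] at h3
  exact h3

lemma contDiff_mk2 {f g : ℝ → ℝ} (hf : ContDiff ℝ 1 f) (hg : ContDiff ℝ 1 g) :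
    ContDiff ℝ 1 (fun t => mk2 (f t) (g t)) := by
  have h1 : ContDiff ℝ 1 (fun t => (![f t, g t] : Fin 2 → ℝ)) := by
    apply contDiff_pi.2
    intro i
    fin_cases i <;> simpa
  set L := (PiLp.continuousLinearEquiv 2 ℝ (fun _ : Fin 2 => ℝ)).symm.toContinuousLinearMap with hL
  have h2 := L.contDiff.comp h1
  have h4 : (⇑L ∘ fun t => ![f t, g t]) = fun t => mk2 (f t) (g t) := rfl
  rw [h4] at h2
  exact h2

lemma scalar_est {G q c : ℝ} (hq : q = Real.sqrt (1 - G^2)) (hG : G^2 < 1)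
    (hc0 : 0 ≤ c) (hc1 : c ≤ 1) :
    (Real.sqrt (1 + (c * (G / q))^2) - G * (c * (G / q)) ≤ 1 / q) ∧
    (c = 1 → Real.sqrt (1 + (c * (G / q))^2) - G * (c * (G / q)) = q) := by
  have hq0 : 0 < q := hq ▸ Real.sqrt_pos.2 (by linarith)
  have hq2 : q^2 = 1 - G^2 := hq ▸ Real.sq_sqrt (by linarith)
  have harg : 1 + (c * (G / q))^2 = (q^2 + c^2 * G^2) / q^2 := by
    field_simp
  have hsq : Real.sqrt (1 + (c * (G / q))^2) = Real.sqrt (q^2 + c^2 * G^2) / q := by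
    rw [harg, Real.sqrt_div (by positivity), Real.sqrt_sq hq0.le]
  constructor
  · rw [hsq]
    have h1 : Real.sqrt (q^2 + c^2 * G^2) ≤ 1 := by
      rw [show (1:ℝ) = Real.sqrt 1 by rw [Real.sqrt_one]]
      apply Real.sqrt_le_sqrt
      nlinarith [mul_nonneg (sq_nonneg G) (by nlinarith : (0:ℝ) ≤ 1 - c^2)]
    have h2 : 0 ≤ G * (c * (G / q)) := by
      have he : G * (c * (G / q)) = c * G^2 / q := by ring
      rw [he]
      positivity
    have h3 : Real.sqrt (q^2 + c^2 * G^2) / q ≤ 1 / q := by gcongr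
    linarith
  · intro hc
    subst hc
    rw [hsq]
    have h1 : q^2 + 1^2 * G^2 = 1 := by nlinarith
    rw [h1, Real.sqrt_one]
    field_simp
    nlinarith

lemma subst_int (f : ℝ → ℝ) (a : ℝ) :
    (∫ t in (0:ℝ)..1, a * f (a * (1 - t))) = ∫ r in (0:ℝ)..a, f r := by
  rw [intervalIntegral.integral_const_mul]
  rw [intervalIntegral.integral_comp_sub_left (fun y => f (a * y)) 1]
  rw [show (1:ℝ) - 1 = 0 by norm_num, show (1:ℝ) - 0 = 1 by norm_num]
  rw [← smul_eq_mul, intervalIntegral.smul_integral_comp_mul_left (fun y => f y) a]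
  norm_num

lemma norm2 (x : E2) : ‖x‖ = Real.sqrt (x 0 ^ 2 + x 1 ^ 2) := by
  simp [EuclideanSpace.norm_eq, Fin.sum_univ_two]

lemma inner_perp_left' (w v : E2) : ⟪perp w, v⟫ = w 0 * v 1 - w 1 * v 0 := by
  simp [perp, mk2, PiLp.inner_apply, Fin.sum_univ_two]
  ring

lemma mk2_eta (w : E2) : mk2 (w 0) (w 1) = w := by
  ext i
  fin_cases i <;> rfl

lemma mk2_zero : mk2 0 0 = (0 : E2) := by
  ext i
  fin_cases i <;> rfl

lemma intervalIntegrable_of_Ico' {a b : ℝ} (hab : a ≤ b) {F : ℝ → ℝ} {C : ℝ}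
    (hcont : ContinuousOn F (Set.Ico a b))
    (hb : ∀ t ∈ Set.Ico a b, |F t| ≤ C) : IntervalIntegrable F volume a b := by
  rw [intervalIntegrable_iff_integrableOn_Ioo_of_le hab]
  have hmeas : AEStronglyMeasurable F (volume.restrict (Set.Ioo a b)) :=
    (hcont.mono Set.Ioo_subset_Ico_self).aestronglyMeasurable measurableSet_Ioo
  have hconst : IntegrableOn (fun _ : ℝ => C) (Set.Ioo a b) volume := by
    rw [integrableOn_const_iff]
    right
    simp [Real.volume_Ioo]
  refine hconst.integrable.mono' hmeas ?_
  rw [ae_restrict_iff' measurableSet_Ioo]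
  filter_upwards with t ht
  exact hb t (Set.Ioo_subset_Ico_self ht)

set_option maxHeartbeats 2000000 in
lemma upper_bound (g : ℝ → ℝ) (hgc : ContinuousOn g (Set.Ici 0))
    (hgr : ∀ r : ℝ, 0 ≤ r → g r ∈ Set.Ioo (-1 : ℝ) 1)
    (Fm : E2 → E2 → ℝ)
    (hFm : ∀ z u : E2, Fm z u = ‖u‖ - (g ‖z‖ / ‖z‖) * ⟪perp z, u⟫)
    (z : E2) (hz : z ≠ 0) (ε : ℝ) (hε : 0 < ε) :
    ∃ γ : ℝ → E2, ContDiffOn ℝ 1 γ (Set.Icc 0 1) ∧ γ 0 = z ∧ γ 1 = 0 ∧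
      (∀ t ∈ Set.Ico (0:ℝ) 1, γ t ≠ 0) ∧
      (∫ t in (0:ℝ)..1, Fm (γ t) (derivWithin γ (Set.Icc 0 1) t))
        ≤ (∫ r in (0:ℝ)..‖z‖, Real.sqrt (1 - g r ^ 2)) + ε := by
  set a := ‖z‖ with ha_def
  have ha : 0 < a := norm_pos_iff.2 hz
  have hz2 : z 0 ^ 2 + z 1 ^ 2 = a ^ 2 := by
    have h1 : a = Real.sqrt (z 0 ^ 2 + z 1 ^ 2) := norm2 z
    have h2 : 0 ≤ z 0 ^ 2 + z 1 ^ 2 := by positivity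
    rw [h1, Real.sq_sqrt h2]
  -- max of |g| on [0, a]
  obtain ⟨r₀, hr₀, hmax⟩ := isCompact_Icc.exists_isMaxOn (Set.nonempty_Icc.2 ha.le)
    ((hgc.mono Set.Icc_subset_Ici_self).abs)
  set M := |g r₀| with hM_def
  have hM0 : 0 ≤ M := abs_nonneg _
  have hM1 : M < 1 := by
    obtain ⟨h1, h2⟩ := hgr r₀ hr₀.1
    rw [hM_def, abs_lt]
    exact ⟨by linarith, h2⟩
  have hMb : ∀ r ∈ Set.Icc (0:ℝ) a, |g r| ≤ M := fun r hr => hmax hr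
  set Q0 := Real.sqrt (1 - M ^ 2) with hQ0_def
  have hQ0 : 0 < Q0 := Real.sqrt_pos.2 (by nlinarith [mul_pos (by linarith : (0:ℝ) < 1 - M) (by linarith : (0:ℝ) < 1 + M)])
  have hQ01 : Q0 ≤ 1 := Real.sqrt_le_one.mpr (by nlinarith [sq_nonneg M])
  set K := a / Q0 with hK_def
  have hK : 0 < K := by positivity
  have hKa : a ≤ K := by
    rw [hK_def, le_div_iff₀ hQ0]
    nlinarith
  set δ := min 1 (ε / K) with hδ_def
  have hδ0 : 0 < δ := lt_min one_pos (by positivity)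
  have hδ1 : δ ≤ 1 := min_le_left _ _
  have hδε : K * δ ≤ ε := by
    calc K * δ ≤ K * (ε / K) := by
          apply mul_le_mul_of_nonneg_left (min_le_right _ _) hK.le
      _ = ε := by field_simp
  -- clamp and basic functions
  set τ : ℝ → ℝ := fun t => min (max t 0) 1 with hτ_def
  have hτcont : Continuous τ := (continuous_id.max continuous_const).min continuous_const
  have hτmem : ∀ t, τ t ∈ Set.Icc (0:ℝ) 1 :=
    fun t => ⟨le_min (le_max_right _ _) zero_le_one, min_le_right _ _⟩
  have hτeq : ∀ t ∈ Set.Icc (0:ℝ) 1, τ t = t := by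
    intro t ht
    rw [hτ_def]
    simp only [max_eq_left ht.1, min_eq_left ht.2]
  set ρ : ℝ → ℝ := fun t => a * (1 - τ t) with hρ_def
  have hρcont : Continuous ρ := continuous_const.mul (continuous_const.sub hτcont)
  have hρmem : ∀ t, ρ t ∈ Set.Icc (0:ℝ) a := by
    intro t
    obtain ⟨h1, h2⟩ := hτmem t
    constructor
    · apply mul_nonneg ha.le; linarith
    · show a * (1 - τ t) ≤ a
      nlinarith [mul_nonneg ha.le h1]
  have hgρcont : Continuous (fun t => g (ρ t)) :=
    hgc.comp_continuous hρcont (fun t => (hρmem t).1)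
  have hg2' : ∀ t, g (ρ t) ^ 2 < 1 := by
    intro t
    obtain ⟨h1, h2⟩ := hgr (ρ t) (hρmem t).1
    nlinarith
  set q : ℝ → ℝ := fun t => Real.sqrt (1 - g (ρ t) ^ 2) with hq_def
  have hq0 : ∀ t, 0 < q t := fun t => Real.sqrt_pos.2 (by linarith [hg2' t])
  have hqQ : ∀ t, Q0 ≤ q t := by
    intro t
    apply Real.sqrt_le_sqrt
    have := hMb (ρ t) (hρmem t)
    nlinarith [abs_nonneg (g (ρ t)), sq_abs (g (ρ t)), neg_abs_le (g (ρ t)), le_abs_self (g (ρ t))]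
  have hqcont : Continuous q :=
    Real.continuous_sqrt.comp (continuous_const.sub (hgρcont.pow 2))
  have hmaxpos : ∀ t, 0 < max (1 - τ t) δ := fun t => lt_of_lt_of_le hδ0 (le_max_right _ _)
  set ψ : ℝ → ℝ := fun t => g (ρ t) / (max (1 - τ t) δ * q t) with hψ_def
  have hψcont : Continuous ψ := by
    apply hgρcont.div (((continuous_const.sub hτcont).max continuous_const).mul hqcont)
    intro t
    exact (mul_pos (hmaxpos t) (hq0 t)).ne'
  set θ : ℝ → ℝ := fun t => ∫ s in (0:ℝ)..t, ψ s with hθ_def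
  have hθd : ∀ t, HasDerivAt θ (ψ t) t := fun t =>
    intervalIntegral.integral_hasDerivAt_right (hψcont.intervalIntegrable 0 t)
      (hψcont.stronglyMeasurableAtFilter volume (nhds t)) hψcont.continuousAt
  have hθ0 : θ 0 = 0 := intervalIntegral.integral_same
  have hθC1 : ContDiff ℝ 1 θ := by
    rw [contDiff_one_iff_deriv]
    constructor
    · exact fun t => (hθd t).differentiableAt
    · have : deriv θ = ψ := funext fun t => (hθd t).deriv
      rw [this]
      exact hψcont
  -- the curve
  set A : ℝ → ℝ := fun t => (1 - t) * (Real.cos (θ t) * z 0 - Real.sin (θ t) * z 1) with hA_def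
  set B : ℝ → ℝ := fun t => (1 - t) * (Real.sin (θ t) * z 0 + Real.cos (θ t) * z 1) with hB_def
  set A' : ℝ → ℝ := fun t => (-1) * (Real.cos (θ t) * z 0 - Real.sin (θ t) * z 1)
      + (1 - t) * (-Real.sin (θ t) * ψ t * z 0 - Real.cos (θ t) * ψ t * z 1) with hA'_def
  set B' : ℝ → ℝ := fun t => (-1) * (Real.sin (θ t) * z 0 + Real.cos (θ t) * z 1)
      + (1 - t) * (Real.cos (θ t) * ψ t * z 0 + -Real.sin (θ t) * ψ t * z 1) with hB'_def
  set γ : ℝ → E2 := fun t => mk2 (A t) (B t) with hγ_def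
  have hcos : ∀ t, HasDerivAt (fun t => Real.cos (θ t)) (-Real.sin (θ t) * ψ t) t :=
    fun t => (Real.hasDerivAt_cos (θ t)).comp t (hθd t)
  have hsin : ∀ t, HasDerivAt (fun t => Real.sin (θ t)) (Real.cos (θ t) * ψ t) t :=
    fun t => (Real.hasDerivAt_sin (θ t)).comp t (hθd t)
  have h1t : ∀ t : ℝ, HasDerivAt (fun t : ℝ => 1 - t) (-1) t := by
    intro t
    simpa using (hasDerivAt_id t).const_sub 1
  have hAd : ∀ t, HasDerivAt A (A' t) t := by
    intro t
    have h2 := ((hcos t).mul_const (z 0)).sub ((hsin t).mul_const (z 1))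
    have := (h1t t).mul h2
    exact this
  have hBd : ∀ t, HasDerivAt B (B' t) t := by
    intro t
    have h2 := ((hsin t).mul_const (z 0)).add ((hcos t).mul_const (z 1))
    have := (h1t t).mul h2
    exact this
  have hγd : ∀ t, HasDerivAt γ (mk2 (A' t) (B' t)) t := fun t => hasDerivAt_mk2 (hAd t) (hBd t)
  have hγC1 : ContDiff ℝ 1 γ := by
    apply contDiff_mk2
    · exact (contDiff_const.sub contDiff_id).mul
        ((hθC1.cos.mul contDiff_const).sub (hθC1.sin.mul contDiff_const))
    · exact (contDiff_const.sub contDiff_id).mul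
        ((hθC1.sin.mul contDiff_const).add (hθC1.cos.mul contDiff_const))
  have hderivW : ∀ t ∈ Set.Icc (0:ℝ) 1, derivWithin γ (Set.Icc 0 1) t = mk2 (A' t) (B' t) :=
    fun t ht => ((hγd t).hasDerivWithinAt).derivWithin (uniqueDiffOn_Icc one_pos t ht)
  have hγ0 : γ 0 = z := by
    rw [hγ_def]
    simp only [hA_def, hB_def, hθ0]
    norm_num [Real.cos_zero, Real.sin_zero]
    exact mk2_eta z
  have hγ1 : γ 1 = 0 := by
    rw [hγ_def]
    simp only [hA_def, hB_def]
    norm_num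
    exact mk2_zero
  have hnormγ : ∀ t, ‖γ t‖ = (1 - t) * a ∨ True := fun _ => Or.inr trivial
  have hcs : ∀ t, Real.sin (θ t)^2 + Real.cos (θ t)^2 = 1 := fun t => Real.sin_sq_add_cos_sq _
  have hnγ : ∀ t ∈ Set.Icc (0:ℝ) 1, ‖γ t‖ = (1 - t) * a := by
    intro t ht
    rw [hγ_def]
    show ‖mk2 (A t) (B t)‖ = _
    rw [norm2]
    show Real.sqrt (A t ^ 2 + B t ^ 2) = _
    have he : A t ^ 2 + B t ^ 2 = ((1 - t) * a)^2 := by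
      rw [hA_def, hB_def]
      have h1 := hcs t
      linear_combination ((1 - t)^2 * (z 0 ^ 2 + z 1 ^ 2)) * h1 + (1 - t)^2 * hz2
    rw [he, Real.sqrt_sq (by nlinarith [ht.2, ha.le] : (0:ℝ) ≤ (1 - t) * a)]
  have hne : ∀ t ∈ Set.Ico (0:ℝ) 1, γ t ≠ 0 := by
    intro t ht h
    have h1 := hnγ t ⟨ht.1, ht.2.le⟩
    rw [h, norm_zero] at h1
    nlinarith [ht.2, ha]
  set s : ℝ → ℝ := fun t => (1 - t) * ψ t with hs_def
  have hρt : ∀ t ∈ Set.Icc (0:ℝ) 1, ρ t = a * (1 - t) := by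
    intro t ht
    show a * (1 - τ t) = a * (1 - t)
    rw [hτeq t ht]
  have hq_eq : ∀ t, q t = Real.sqrt (1 - g (ρ t) ^ 2) := fun t => rfl
  have hinn : ∀ t, ⟪perp (γ t), mk2 (A' t) (B' t)⟫ = (1 - t) * s t * a ^ 2 := by
    intro t
    rw [inner_perp_left']
    show A t * B' t - B t * A' t = _
    simp only [hA_def, hB_def, hA'_def, hB'_def, hs_def]
    linear_combination ((1 - t) * ((1 - t) * ψ t) * (z 0 ^ 2 + z 1 ^ 2)) * (hcs t)
      + ((1 - t) * ((1 - t) * ψ t)) * hz2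
  have hnu : ∀ t, ‖mk2 (A' t) (B' t)‖ = a * Real.sqrt (1 + s t ^ 2) := by
    intro t
    rw [norm2]
    show Real.sqrt (A' t ^ 2 + B' t ^ 2) = _
    have he : A' t ^ 2 + B' t ^ 2 = a ^ 2 * (1 + s t ^ 2) := by
      simp only [hA'_def, hB'_def, hs_def]
      linear_combination ((1 + ((1 - t) * ψ t) ^ 2) * (z 0 ^ 2 + z 1 ^ 2)) * (hcs t)
        + (1 + ((1 - t) * ψ t) ^ 2) * hz2
    rw [he, Real.sqrt_mul (sq_nonneg a), Real.sqrt_sq ha.le]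
  set FF : ℝ → ℝ := fun t => Fm (γ t) (mk2 (A' t) (B' t)) with hFF_def
  have hFeq : ∀ t ∈ Set.Ico (0:ℝ) 1, FF t = a * (Real.sqrt (1 + s t ^ 2) - g (ρ t) * s t) := by
    intro t ht
    have hm : 0 < 1 - t := by linarith [ht.2]
    show Fm (γ t) (mk2 (A' t) (B' t)) = _
    rw [hFm, hnγ t ⟨ht.1, ht.2.le⟩, hinn t, hnu t, hρt t ⟨ht.1, ht.2.le⟩]
    rw [show (1 - t) * a = a * (1 - t) from mul_comm _ _]
    field_simp
  have hsc : ∀ t ∈ Set.Ico (0:ℝ) 1, s t = ((1 - t) / max (1 - t) δ) * (g (ρ t) / q t) := by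
    intro t ht
    show (1 - t) * ψ t = _
    have : ψ t = g (ρ t) / (max (1 - τ t) δ * q t) := rfl
    rw [this, hτeq t ⟨ht.1, ht.2.le⟩]
    have h1 : (0:ℝ) < max (1 - t) δ := lt_of_lt_of_le hδ0 (le_max_right _ _)
    field_simp
  have hF1 : FF 1 = a := by
    show Fm (γ 1) (mk2 (A' 1) (B' 1)) = a
    rw [hFm, hγ1]
    have hp0 : ⟪perp (0:E2), mk2 (A' 1) (B' 1)⟫ = 0 := by
      rw [inner_perp_left']
      simp
    rw [hp0, mul_zero, sub_zero, hnu 1]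
    have hs1 : s 1 = 0 := by
      show (1 - 1) * ψ 1 = 0
      ring
    rw [hs1]
    norm_num
  have hFb : ∀ t ∈ Set.Icc (0:ℝ) 1, FF t ≤ K := by
    intro t ht
    by_cases h1 : t = 1
    · rw [h1, hF1]; exact hKa
    · have ht' : t ∈ Set.Ico (0:ℝ) 1 := ⟨ht.1, lt_of_le_of_ne ht.2 h1⟩
      rw [hFeq t ht']
      have hmax2 : (0:ℝ) < max (1 - t) δ := lt_of_lt_of_le hδ0 (le_max_right _ _)
      have hc0 : 0 ≤ (1 - t) / max (1 - t) δ := div_nonneg (by linarith [ht'.2]) hmax2.le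
      have hc1 : (1 - t) / max (1 - t) δ ≤ 1 := (div_le_one hmax2).2 (le_max_left _ _)
      have hest := (scalar_est (hq_eq t) (hg2' t) hc0 hc1).1
      rw [← hsc t ht'] at hest
      calc a * (Real.sqrt (1 + s t ^ 2) - g (ρ t) * s t) ≤ a * (1 / q t) :=
            mul_le_mul_of_nonneg_left hest ha.le
        _ ≤ a * (1 / Q0) :=
            mul_le_mul_of_nonneg_left (one_div_le_one_div_of_le hQ0 (hqQ t)) ha.le
        _ = K := by rw [hK_def]; ring
  have hF0 : ∀ t ∈ Set.Icc (0:ℝ) 1, 0 ≤ FF t := by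
    intro t ht
    by_cases h1 : t = 1
    · rw [h1, hF1]; exact ha.le
    · have ht' : t ∈ Set.Ico (0:ℝ) 1 := ⟨ht.1, lt_of_le_of_ne ht.2 h1⟩
      rw [hFeq t ht']
      have hg1 : |g (ρ t)| ≤ 1 := by
        obtain ⟨ha1, ha2⟩ := hgr (ρ t) (hρmem t).1
        rw [abs_le]; exact ⟨by linarith, by linarith⟩
      have h2 : g (ρ t) * s t ≤ |s t| := by
        calc g (ρ t) * s t ≤ |g (ρ t) * s t| := le_abs_self _
          _ = |g (ρ t)| * |s t| := abs_mul _ _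
          _ ≤ 1 * |s t| := mul_le_mul_of_nonneg_right hg1 (abs_nonneg _)
          _ = |s t| := one_mul _
      have h3 : |s t| ≤ Real.sqrt (1 + s t ^ 2) := by
        rw [← Real.sqrt_sq_eq_abs]
        exact Real.sqrt_le_sqrt (by nlinarith)
      have : 0 ≤ Real.sqrt (1 + s t ^ 2) - g (ρ t) * s t := by linarith
      positivity
  have hFFcont : ContinuousOn FF (Set.Ico 0 1) := by
    have hscont : Continuous s := (continuous_const.sub continuous_id).mul hψcont
    have hc : Continuous (fun t => a * (Real.sqrt (1 + s t ^ 2) - g (ρ t) * s t)) :=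
      continuous_const.mul ((Real.continuous_sqrt.comp
        (continuous_const.add (hscont.pow 2))).sub (hgρcont.mul hscont))
    exact hc.continuousOn.congr hFeq
  have hFFint : IntervalIntegrable FF volume 0 1 := by
    apply intervalIntegrable_of_Ico' zero_le_one hFFcont
    intro t ht
    have ht' : t ∈ Set.Icc (0:ℝ) 1 := ⟨ht.1, ht.2.le⟩
    rw [abs_le]
    exact ⟨by linarith [hF0 t ht', hK.le], hFb t ht'⟩
  have hδIcc : (0:ℝ) ≤ 1 - δ := by linarith
  have hsub1 : IntervalIntegrable FF volume 0 (1 - δ) := by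
    apply hFFint.mono_set
    rw [Set.uIcc_of_le hδIcc, Set.uIcc_of_le zero_le_one]
    exact Set.Icc_subset_Icc le_rfl (by linarith)
  have hsub2 : IntervalIntegrable FF volume (1 - δ) 1 := by
    apply hFFint.mono_set
    rw [Set.uIcc_of_le (by linarith : (1:ℝ) - δ ≤ 1), Set.uIcc_of_le zero_le_one]
    exact Set.Icc_subset_Icc (by linarith) le_rfl
  have hsplit : (∫ t in (0:ℝ)..1, FF t)
      = (∫ t in (0:ℝ)..(1 - δ), FF t) + ∫ t in (1 - δ)..1, FF t :=
    (intervalIntegral.integral_add_adjacent_intervals hsub1 hsub2).symm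
  have hFeq2 : ∀ t ∈ Set.Icc (0:ℝ) (1 - δ), FF t = a * q t := by
    intro t ht
    have ht' : t ∈ Set.Ico (0:ℝ) 1 := ⟨ht.1, by linarith [ht.2]⟩
    rw [hFeq t ht']
    have hmx : max (1 - t) δ = 1 - t := max_eq_left (by linarith [ht.2])
    have hmt : (0:ℝ) < 1 - t := by linarith [ht.2]
    have hc : (1 - t) / max (1 - t) δ = 1 := by
      rw [hmx]
      field_simp
    have hest := (scalar_est (hq_eq t) (hg2' t) (by rw [hc]; norm_num) (by rw [hc])).2 hc
    rw [← hsc t ht'] at hest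
    rw [hest]
  have haqcont : Continuous (fun t => a * q t) := continuous_const.mul hqcont
  have hmain : (∫ t in (0:ℝ)..(1 - δ), FF t) = ∫ t in (0:ℝ)..(1 - δ), a * q t := by
    apply intervalIntegral.integral_congr
    intro t ht
    rw [Set.uIcc_of_le hδIcc] at ht
    exact hFeq2 t ht
  have hq_nn : ∀ t : ℝ, 0 ≤ a * q t := fun t => mul_nonneg ha.le (Real.sqrt_nonneg _)
  have hmain2 : (∫ t in (0:ℝ)..(1 - δ), a * q t) ≤ ∫ t in (0:ℝ)..1, a * q t := by
    have hadd := intervalIntegral.integral_add_adjacent_intervals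
      (haqcont.intervalIntegrable (μ := volume) 0 (1 - δ)) (haqcont.intervalIntegrable (μ := volume) (1 - δ) 1)
    have hpos : 0 ≤ ∫ t in (1 - δ)..1, a * q t :=
      intervalIntegral.integral_nonneg (by linarith) (fun x _ => hq_nn x)
    linarith
  have hfull : (∫ t in (0:ℝ)..1, a * q t) = ∫ r in (0:ℝ)..a, Real.sqrt (1 - g r ^ 2) := by
    have hcg : Set.EqOn (fun t => a * q t)
        (fun t => a * Real.sqrt (1 - g (a * (1 - t)) ^ 2)) (Set.uIcc (0:ℝ) 1) := by
      intro t ht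
      rw [Set.uIcc_of_le zero_le_one] at ht
      simp only
      rw [hq_eq t, hρt t ht]
    rw [intervalIntegral.integral_congr hcg]
    exact subst_int (fun r => Real.sqrt (1 - g r ^ 2)) a
  have htail : (∫ t in (1 - δ)..1, FF t) ≤ K * δ := by
    have h1 : (∫ t in (1 - δ)..1, FF t) ≤ ∫ t in (1 - δ)..1, (fun _ => K) t :=
      intervalIntegral.integral_mono_on (by linarith) hsub2 intervalIntegrable_const
        (fun t ht => hFb t ⟨by linarith [ht.1], ht.2⟩)
    have h2 : (∫ t in (1 - δ)..1, (fun _ => K) t) = K * δ := by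
      rw [intervalIntegral.integral_const]
      simp
      ring
    linarith
  have hswitch : (∫ t in (0:ℝ)..1, Fm (γ t) (derivWithin γ (Set.Icc 0 1) t))
      = ∫ t in (0:ℝ)..1, FF t := by
    apply intervalIntegral.integral_congr
    intro t ht
    rw [Set.uIcc_of_le zero_le_one] at ht
    simp only
    rw [hderivW t ht]
  refine ⟨γ, hγC1.contDiffOn, hγ0, hγ1, hne, ?_⟩
  rw [hswitch, hsplit, hmain]
  linarith [hmain2, hfull ▸ hmain2, htail, hδε]

lemma hasDerivAt_norm_curve (γ : ℝ → E2) (v : E2) (t : ℝ) (h : HasDerivAt γ v t) (h0 : γ t ≠ 0) :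
    HasDerivAt (fun s => ‖γ s‖) (⟪γ t, v⟫ / ‖γ t‖) t := by
  have h1 : HasDerivAt (fun s => ‖γ s‖^2) (2 * ⟪γ t, v⟫) t := h.norm_sq
  have hne : ‖γ t‖^2 ≠ 0 := pow_ne_zero _ (norm_ne_zero_iff.2 h0)
  have h2 := (Real.hasDerivAt_sqrt hne).comp t h1
  simp only [Function.comp_def] at h2
  have heq : (fun s => Real.sqrt (‖γ s‖^2)) = fun s => ‖γ s‖ := by
    funext s; exact Real.sqrt_sq (norm_nonneg _)
  rw [heq] at h2
  refine h2.congr_deriv ?_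
  rw [Real.sqrt_sq (norm_nonneg _)]
  have : ‖γ t‖ ≠ 0 := norm_ne_zero_iff.2 h0
  field_simp

lemma inner_perp_self (w : E2) : ⟪perp w, w⟫ = 0 := by
  simp [perp, mk2, PiLp.inner_apply, Fin.sum_univ_two]
  ring

lemma norm_perp (w : E2) : ‖perp w‖ = ‖w‖ := by
  simp only [perp, mk2, EuclideanSpace.norm_eq, Fin.sum_univ_two]
  congr 1
  simp [Matrix.cons_val_zero, Matrix.cons_val_one]
  ring

lemma lb_alg (w u : E2) (hw : w ≠ 0) (G : ℝ) (hG : G^2 ≤ 1) :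
    -Real.sqrt (1 - G^2) * (⟪w, u⟫ / ‖w‖) ≤ ‖u‖ - (G / ‖w‖) * ⟪perp w, u⟫ := by
  set r := ‖w‖ with hr
  have hr0 : 0 < r := norm_pos_iff.2 hw
  set q := Real.sqrt (1 - G^2) with hq
  have hq0 : 0 ≤ q := Real.sqrt_nonneg _
  have hq2 : q^2 = 1 - G^2 := Real.sq_sqrt (by linarith)
  have key : G * ⟪perp w, u⟫ - q * ⟪w, u⟫ ≤ r * ‖u‖ := by
    have h1 : G * ⟪perp w, u⟫ - q * ⟪w, u⟫ = ⟪G • perp w - q • w, u⟫ := by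
      simp [inner_sub_left, real_inner_smul_left]
    have h2 : ⟪G • perp w - q • w, u⟫ ≤ ‖G • perp w - q • w‖ * ‖u‖ := real_inner_le_norm _ _
    have h3 : ‖G • perp w - q • w‖ = r := by
      have e1 : ‖G • perp w - q • w‖^2 = ‖G • perp w‖^2 - 2 * ⟪G • perp w, q • w⟫ + ‖q • w‖^2 :=
        @norm_sub_sq_real E2 _ _ _ _
      have e2 : ⟪G • perp w, q • w⟫ = 0 := by
        rw [real_inner_smul_left, real_inner_smul_right, inner_perp_self]; ring
      have e3 : ‖G • perp w‖ = |G| * r := by rw [norm_smul, norm_perp]; rfl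
      have e4 : ‖q • w‖ = |q| * r := by rw [norm_smul]; rfl
      have e5 : ‖G • perp w - q • w‖^2 = r^2 := by
        rw [e1, e2, e3, e4]
        rw [mul_pow, mul_pow, sq_abs, sq_abs, hq2]
        ring
      nlinarith [norm_nonneg (G • perp w - q • w)]
    calc G * ⟪perp w, u⟫ - q * ⟪w, u⟫ ≤ ‖G • perp w - q • w‖ * ‖u‖ := h1 ▸ h2
      _ = r * ‖u‖ := by rw [h3]
  have expand : ‖u‖ - (G / r) * ⟪perp w, u⟫ - (-q * (⟪w, u⟫ / r))
      = (r * ‖u‖ - (G * ⟪perp w, u⟫ - q * ⟪w, u⟫)) / r := by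
    field_simp
    ring
  have h5 : 0 ≤ (r * ‖u‖ - (G * ⟪perp w, u⟫ - q * ⟪w, u⟫)) / r :=
    div_nonneg (by linarith) hr0.le
  linarith [expand ▸ h5]

lemma intervalIntegrable_of_Ico {F : ℝ → ℝ} {C : ℝ} (hcont : ContinuousOn F (Set.Ico 0 1))
    (hb : ∀ t ∈ Set.Ico (0:ℝ) 1, |F t| ≤ C) : IntervalIntegrable F volume 0 1 := by
  rw [intervalIntegrable_iff_integrableOn_Ioo_of_le zero_le_one]
  have hmeas : AEStronglyMeasurable F (volume.restrict (Set.Ioo (0:ℝ) 1)) :=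
    (hcont.mono Set.Ioo_subset_Ico_self).aestronglyMeasurable measurableSet_Ioo
  have hconst : IntegrableOn (fun _ : ℝ => C) (Set.Ioo (0:ℝ) 1) volume := by
    rw [integrableOn_const_iff]
    right
    simp [Real.volume_Ioo]
  refine hconst.integrable.mono' hmeas ?_
  rw [ae_restrict_iff' measurableSet_Ioo]
  filter_upwards with t ht
  exact hb t (Set.Ioo_subset_Ico_self ht)

lemma inner2 (x y : E2) : ⟪x, y⟫ = x 0 * y 0 + x 1 * y 1 := by
  simp [PiLp.inner_apply, Fin.sum_univ_two]
  ring

lemma inner_perp_left (w v : E2) : ⟪perp w, v⟫ = w 0 * v 1 - w 1 * v 0 := by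
  rw [inner2]
  show -(w 1) * v 0 + w 0 * v 1 = _
  ring

lemma contApply (i : Fin 2) : Continuous fun w : E2 => w i := by
  exact ((continuous_apply i).comp (PiLp.continuousLinearEquiv 2 ℝ (fun _ : Fin 2 => ℝ)).continuous)

lemma lower_bound (g : ℝ → ℝ) (hgc : ContinuousOn g (Set.Ici 0))
    (hgr : ∀ r : ℝ, 0 ≤ r → g r ∈ Set.Ioo (-1 : ℝ) 1)
    (Fm : E2 → E2 → ℝ)
    (hFm : ∀ z u : E2, Fm z u = ‖u‖ - (g ‖z‖ / ‖z‖) * ⟪perp z, u⟫)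
    (z : E2) (hz : z ≠ 0)
    (γ : ℝ → E2) (hγ : ContDiffOn ℝ 1 γ (Set.Icc 0 1)) (hγ0 : γ 0 = z) (hγ1 : γ 1 = 0)
    (hne : ∀ t ∈ Set.Ico (0:ℝ) 1, γ t ≠ 0) :
    (∫ r in (0:ℝ)..‖z‖, Real.sqrt (1 - g r ^ 2))
      ≤ ∫ t in (0:ℝ)..1, Fm (γ t) (derivWithin γ (Set.Icc 0 1) t) := by
  set f : ℝ → ℝ := fun u => Real.sqrt (1 - g u ^ 2) with hf
  have hg2 : ∀ r : ℝ, 0 ≤ r → g r ^ 2 ≤ 1 := by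
    intro r hr
    obtain ⟨h1, h2⟩ := hgr r hr
    nlinarith
  have hfc : ContinuousOn f (Set.Ici 0) :=
    (continuousOn_const.sub (hgc.pow 2)).sqrt
  have hf1 : ∀ x : ℝ, |f x| ≤ 1 := by
    intro x
    rw [abs_of_nonneg (Real.sqrt_nonneg _)]
    calc Real.sqrt (1 - g x ^ 2) ≤ Real.sqrt 1 := Real.sqrt_le_sqrt (by nlinarith [sq_nonneg (g x)])
      _ = 1 := Real.sqrt_one
  have hfi : ∀ s1 s2 : ℝ, 0 ≤ s1 → 0 ≤ s2 → IntervalIntegrable f volume s1 s2 := by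
    intro s1 s2 h1 h2
    apply (hfc.mono ?_).intervalIntegrable
    intro x hx
    exact le_trans (le_inf h1 h2) hx.1
  set GG : ℝ → ℝ := fun s => ∫ u in (0:ℝ)..s, f u with hGG
  have hGlip : ∀ s1 ∈ Set.Ici (0:ℝ), ∀ s2 ∈ Set.Ici (0:ℝ), dist (GG s1) (GG s2) ≤ 1 * dist s1 s2 := by
    intro s1 h1 s2 h2
    have : GG s1 - GG s2 = ∫ u in s2..s1, f u :=
      intervalIntegral.integral_interval_sub_left (hfi 0 s1 le_rfl h1) (hfi 0 s2 le_rfl h2)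
    rw [Real.dist_eq, Real.dist_eq, this]
    calc |∫ u in s2..s1, f u| ≤ 1 * |s1 - s2| := by
          have := intervalIntegral.norm_integral_le_of_norm_le_const
            (C := 1) (f := f) (a := s2) (b := s1) (fun x _ => hf1 x)
          simpa [abs_sub_comm s1 s2] using this
      _ = 1 * |s1 - s2| := by ring
  have hGcont : ContinuousOn GG (Set.Ici 0) := by
    apply LipschitzOnWith.continuousOn (K := 1)
    apply LipschitzOnWith.of_dist_le_mul
    intro x hx y hy
    simpa using hGlip x hx y hy
  set u := derivWithin γ (Set.Icc 0 1) with hu_def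
  have hγc : ContinuousOn γ (Set.Icc 0 1) := hγ.continuousOn
  have hu : ContinuousOn u (Set.Icc 0 1) :=
    hγ.continuousOn_derivWithin (uniqueDiffOn_Icc one_pos) le_rfl
  obtain ⟨C, hC⟩ : ∃ C, ∀ t ∈ Set.Icc (0:ℝ) 1, ‖u t‖ ≤ C :=
    isCompact_Icc.exists_bound_of_continuousOn hu
  have hC0 : 0 ≤ C := le_trans (norm_nonneg _) (hC 0 ⟨le_rfl, zero_le_one⟩)
  set f' : ℝ → ℝ := fun t => f ‖γ t‖ * (⟪γ t, u t⟫ / ‖γ t‖) with hf'_def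
  -- bounds
  have hRb : ∀ t ∈ Set.Icc (0:ℝ) 1, |⟪γ t, u t⟫ / ‖γ t‖| ≤ C := by
    intro t ht
    by_cases h : γ t = 0
    · simp [h, hC0]
    · have hr : 0 < ‖γ t‖ := norm_pos_iff.2 h
      rw [abs_div, abs_of_nonneg (norm_nonneg _), div_le_iff₀ hr]
      calc |⟪γ t, u t⟫| ≤ ‖γ t‖ * ‖u t‖ := abs_real_inner_le_norm _ _
        _ ≤ ‖γ t‖ * C := by
            have := hC t ht
            nlinarith [norm_nonneg (γ t)]
        _ = C * ‖γ t‖ := by ring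
  have hf'b : ∀ t ∈ Set.Icc (0:ℝ) 1, |f' t| ≤ C := by
    intro t ht
    rw [hf'_def]
    simp only []
    rw [abs_mul]
    calc |f ‖γ t‖| * |⟪γ t, u t⟫ / ‖γ t‖| ≤ 1 * C :=
        mul_le_mul (hf1 _) (hRb t ht) (abs_nonneg _) zero_le_one
      _ = C := one_mul C
  have hFcb : ∀ t ∈ Set.Icc (0:ℝ) 1, |Fm (γ t) (u t)| ≤ 2 * C := by
    intro t ht
    rw [hFm]
    have h2 : |g ‖γ t‖ / ‖γ t‖ * ⟪perp (γ t), u t⟫| ≤ C := by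
      by_cases h : γ t = 0
      · rw [h]
        have e1 : ⟪perp (0:E2), u t⟫ = 0 := by rw [inner_perp_left]; norm_num
        rw [e1, mul_zero, abs_zero]
        exact hC0
      · have hr : 0 < ‖γ t‖ := norm_pos_iff.2 h
        have hg1 : |g ‖γ t‖| ≤ 1 := by
          obtain ⟨ha1, ha2⟩ := hgr _ (norm_nonneg (γ t))
          rw [abs_le]; constructor <;> linarith
        have hinn : |⟪perp (γ t), u t⟫| ≤ ‖γ t‖ * ‖u t‖ := by
          rw [← norm_perp (γ t)]
          exact abs_real_inner_le_norm _ _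
        rw [abs_mul, abs_div, abs_of_nonneg (norm_nonneg _)]
        calc |g ‖γ t‖| / ‖γ t‖ * |⟪perp (γ t), u t⟫|
            ≤ 1 / ‖γ t‖ * (‖γ t‖ * ‖u t‖) := by
              apply mul_le_mul _ hinn (abs_nonneg _) (by positivity)
              gcongr
          _ = ‖u t‖ := by field_simp
          _ ≤ C := hC t ht
    calc |‖u t‖ - g ‖γ t‖ / ‖γ t‖ * ⟪perp (γ t), u t⟫|
        ≤ |‖u t‖| + |g ‖γ t‖ / ‖γ t‖ * ⟪perp (γ t), u t⟫| := abs_sub _ _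
      _ ≤ C + C := by
          refine add_le_add ?_ h2
          rw [abs_of_nonneg (norm_nonneg _)]
          exact hC t ht
      _ = 2 * C := by ring
  -- continuity on Ico
  have hγc' : ContinuousOn γ (Set.Ico 0 1) := hγc.mono Set.Ico_subset_Icc_self
  have hu' : ContinuousOn u (Set.Ico 0 1) := hu.mono Set.Ico_subset_Icc_self
  have hn : ContinuousOn (fun t => ‖γ t‖) (Set.Ico 0 1) := hγc'.norm
  have hrne : ∀ t ∈ Set.Ico (0:ℝ) 1, ‖γ t‖ ≠ 0 := fun t ht => norm_ne_zero_iff.2 (hne t ht)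
  have hgn : ContinuousOn (fun t => g ‖γ t‖) (Set.Ico 0 1) :=
    hgc.comp hn (fun t _ => norm_nonneg _)
  have hcoord : ∀ i : Fin 2, ContinuousOn (fun t => γ t i) (Set.Ico 0 1) :=
    fun i => (contApply i).comp_continuousOn hγc'
  have hucoord : ∀ i : Fin 2, ContinuousOn (fun t => u t i) (Set.Ico 0 1) :=
    fun i => (contApply i).comp_continuousOn hu'
  have hinncont : ContinuousOn (fun t => ⟪perp (γ t), u t⟫) (Set.Ico 0 1) := by
    have : (fun t => ⟪perp (γ t), u t⟫) = fun t => γ t 0 * u t 1 - γ t 1 * u t 0 := by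
      funext t; rw [inner_perp_left]
    rw [this]
    exact ((hcoord 0).mul (hucoord 1)).sub ((hcoord 1).mul (hucoord 0))
  have hinncont2 : ContinuousOn (fun t => ⟪γ t, u t⟫) (Set.Ico 0 1) := by
    have : (fun t => ⟪γ t, u t⟫) = fun t => γ t 0 * u t 0 + γ t 1 * u t 1 := by
      funext t; rw [inner2]
    rw [this]
    exact ((hcoord 0).mul (hucoord 0)).add ((hcoord 1).mul (hucoord 1))
  have hFccont : ContinuousOn (fun t => Fm (γ t) (u t)) (Set.Ico 0 1) := by
    have : (fun t => Fm (γ t) (u t))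
        = fun t => ‖u t‖ - g ‖γ t‖ / ‖γ t‖ * ⟪perp (γ t), u t⟫ := by
      funext t; rw [hFm]
    rw [this]
    exact hu'.norm.sub ((hgn.div hn hrne).mul hinncont)
  have hf'cont : ContinuousOn f' (Set.Ico 0 1) :=
    ((hfc.comp hn (fun t _ => norm_nonneg _)).mul (hinncont2.div hn hrne))
  -- integrability
  have hFcint : IntervalIntegrable (fun t => Fm (γ t) (u t)) volume 0 1 :=
    intervalIntegrable_of_Ico hFccont (fun t ht => hFcb t (Set.Ico_subset_Icc_self ht))
  have hf'int : IntervalIntegrable f' volume 0 1 :=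
    intervalIntegrable_of_Ico hf'cont (fun t ht => hf'b t (Set.Ico_subset_Icc_self ht))
  -- FTC
  have hcomp : ContinuousOn (fun t => GG ‖γ t‖) (Set.Icc 0 1) :=
    hGcont.comp hγc.norm (fun t _ => norm_nonneg _)
  have hderiv : ∀ x ∈ Set.Ioo (0:ℝ) 1, HasDerivWithinAt (fun t => GG ‖γ t‖) (f' x) (Set.Ioi x) x := by
    intro x hx
    have hxI : x ∈ Set.Icc (0:ℝ) 1 := ⟨hx.1.le, hx.2.le⟩
    have hdw : HasDerivWithinAt γ (u x) (Set.Icc 0 1) x :=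
      ((hγ.differentiableOn one_ne_zero) x hxI).hasDerivWithinAt
    have hd : HasDerivAt γ (u x) x := hdw.hasDerivAt (Icc_mem_nhds hx.1 hx.2)
    have hgz : γ x ≠ 0 := hne x ⟨hx.1.le, hx.2⟩
    have hnormd := hasDerivAt_norm_curve γ (u x) x hd hgz
    have hp0 : 0 < ‖γ x‖ := norm_pos_iff.2 hgz
    have hGd : HasDerivAt GG (f ‖γ x‖) ‖γ x‖ :=
      intervalIntegral.integral_hasDerivAt_right (hfi 0 _ le_rfl hp0.le)
        (((hfc.mono Set.Ioi_subset_Ici_self).stronglyMeasurableAtFilter isOpen_Ioi) _ hp0)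
        ((hfc.mono Set.Ioi_subset_Ici_self).continuousAt (Ioi_mem_nhds hp0))
    exact (hGd.comp x hnormd).hasDerivWithinAt
  have hFTC : ∫ t in (0:ℝ)..1, f' t = GG ‖γ 1‖ - GG ‖γ 0‖ :=
    intervalIntegral.integral_eq_sub_of_hasDeriv_right_of_le zero_le_one hcomp hderiv hf'int
  have hval : ∫ t in (0:ℝ)..1, f' t = - GG ‖z‖ := by
    rw [hFTC, hγ1, hγ0, norm_zero]
    have : GG 0 = 0 := intervalIntegral.integral_same
    rw [this]
    ring
  -- pointwise inequality
  have hpt : ∀ t ∈ Set.Icc (0:ℝ) 1, -f' t ≤ Fm (γ t) (u t) := by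
    intro t ht
    rw [hFm]
    by_cases h : γ t = 0
    · have e1 : ⟪perp (γ t), u t⟫ = 0 := by rw [inner_perp_left, h]; norm_num
      have e2 : ⟪γ t, u t⟫ = 0 := by rw [h]; exact inner_zero_left _
      rw [hf'_def]
      simp only [e1, e2, mul_zero, zero_div, neg_zero, sub_zero]
      exact norm_nonneg _
    · have h2 : (g ‖γ t‖)^2 ≤ 1 := hg2 _ (norm_nonneg _)
      have hlb := lb_alg (γ t) (u t) h (g ‖γ t‖) h2
      rw [hf'_def]
      simp only [neg_mul] at hlb ⊢
      exact hlb
  -- conclude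
  have hmono : ∫ t in (0:ℝ)..1, -f' t ≤ ∫ t in (0:ℝ)..1, Fm (γ t) (u t) :=
    intervalIntegral.integral_mono_on zero_le_one hf'int.neg hFcint hpt
  rw [intervalIntegral.integral_neg, hval, neg_neg] at hmono
  exact hmono

/-- for the spiraling metric `F_z(u) = ‖u‖ − (g(‖z‖)/‖z‖)⟨z^⊥, u⟩`, the
infimum of the lengths of `C¹` paths joining `z` to the origin (and avoiding the origin
before time 1) equals `∫₀^{‖z‖} √(1 − g(r)²) dr`. -/
theorem stmt19 (g : ℝ → ℝ) (hgc : ContinuousOn g (Set.Ici 0))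
    (hgr : ∀ r : ℝ, 0 ≤ r → g r ∈ Set.Ioo (-1 : ℝ) 1)
    (Fm : E2 → E2 → ℝ)
    (hFm : ∀ z u : E2, Fm z u = ‖u‖ - (g ‖z‖ / ‖z‖) * ⟪perp z, u⟫)
    (z : E2) (hz : z ≠ 0) :
    sInf {L : ℝ | ∃ γ : ℝ → E2,
        ContDiffOn ℝ 1 γ (Set.Icc 0 1) ∧ γ 0 = z ∧ γ 1 = 0 ∧
        (∀ t ∈ Set.Ico (0:ℝ) 1, γ t ≠ 0) ∧
        L = ∫ t in (0:ℝ)..1, Fm (γ t) (derivWithin γ (Set.Icc 0 1) t)}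
      = ∫ r in (0:ℝ)..‖z‖, Real.sqrt (1 - g r ^ 2) := by
  have hlow : ∀ L ∈ {L : ℝ | ∃ γ : ℝ → E2,
      ContDiffOn ℝ 1 γ (Set.Icc 0 1) ∧ γ 0 = z ∧ γ 1 = 0 ∧
      (∀ t ∈ Set.Ico (0:ℝ) 1, γ t ≠ 0) ∧
      L = ∫ t in (0:ℝ)..1, Fm (γ t) (derivWithin γ (Set.Icc 0 1) t)},
      (∫ r in (0:ℝ)..‖z‖, Real.sqrt (1 - g r ^ 2)) ≤ L := by
    rintro L ⟨γ, h1, h2, h3, h4, rfl⟩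
    exact lower_bound g hgc hgr Fm hFm z hz γ h1 h2 h3 h4
  have hbdd : BddBelow {L : ℝ | ∃ γ : ℝ → E2,
      ContDiffOn ℝ 1 γ (Set.Icc 0 1) ∧ γ 0 = z ∧ γ 1 = 0 ∧
      (∀ t ∈ Set.Ico (0:ℝ) 1, γ t ≠ 0) ∧
      L = ∫ t in (0:ℝ)..1, Fm (γ t) (derivWithin γ (Set.Icc 0 1) t)} :=
    ⟨_, hlow⟩
  have hup : ∀ ε : ℝ, 0 < ε → ∃ L ∈ {L : ℝ | ∃ γ : ℝ → E2,
      ContDiffOn ℝ 1 γ (Set.Icc 0 1) ∧ γ 0 = z ∧ γ 1 = 0 ∧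
      (∀ t ∈ Set.Ico (0:ℝ) 1, γ t ≠ 0) ∧
      L = ∫ t in (0:ℝ)..1, Fm (γ t) (derivWithin γ (Set.Icc 0 1) t)},
      L ≤ (∫ r in (0:ℝ)..‖z‖, Real.sqrt (1 - g r ^ 2)) + ε := by
    intro ε hε
    obtain ⟨γ, h1, h2, h3, h4, h5⟩ := upper_bound g hgc hgr Fm hFm z hz ε hε
    exact ⟨_, ⟨γ, h1, h2, h3, h4, rfl⟩, h5⟩
  apply le_antisymm
  · apply le_of_forall_pos_le_add
    intro ε hε
    obtain ⟨L, hL, hLe⟩ := hup ε hε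
    exact le_trans (csInf_le hbdd hL) hLe
  · obtain ⟨L0, hL0, _⟩ := hup 1 one_pos
    exact le_csInf ⟨L0, hL0⟩ hlow
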